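/- Every path in O_n contains exactly n steps equal to (0,1), and the map sending a path in O_n to the n-tuple (c_1, …, c_n) ∈ ℤ^n, where c_i is the x-coordinate of the starting point of the i-th step equal to (0,1) (in order along the path), is a bijection from O_n onto the set of n-tuples (c_1, …, c_n) ∈ ℤ^n satisfying 1 − i ≤ c_i ≤ i − 1 for each i. -/

import Mathlib

/-- A path in `O_n`: a list of lattice points starting at `(0,0)`, ending at `(n,n)`,
with pairwise distinct points, every point `(x,y)` satisfying `x ≤ y` and `-y ≤ x`,
and each step in `{(1,0), (0,1), (-1,0)}`. -/
def IsOPath (n : ℕ) (v : List (ℤ × ℤ)) : Prop :=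
  v.head? = some (0, 0) ∧
  v.getLast? = some ((n : ℤ), (n : ℤ)) ∧
  v.Nodup ∧
  (∀ p ∈ v, p.1 ≤ p.2 ∧ -p.2 ≤ p.1) ∧
  v.Chain' (fun a b => b - a = (1, 0) ∨ b - a = (0, 1) ∨ b - a = (-1, 0))

/-- The `x`-coordinates of starting points of the `(0,1)`-steps of a path, in order. -/
def upStepStarts (v : List (ℤ × ℤ)) : List ℤ :=
  ((v.zip v.tail).filter (fun p => decide (p.2 - p.1 = (0, 1)))).map (fun p => p.1.1)

/-- Every path in `O_n` has exactly `n` steps equal to `(0,1)`, and recording the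
`x`-coordinates `(c_1, …, c_n)` of the starting points of these steps gives a bijection
from `O_n` onto the set of `n`-tuples with `1 - i ≤ c_i ≤ i - 1` for each `i`
(here the `i`-th entry, `1 ≤ i ≤ n`, is indexed by `i - 1 : Fin n`). -/

def seg (a b : ℤ) : List ℤ :=
  if a = b then [a]
  else if a < b then a :: seg (a + 1) b
  else a :: seg (a - 1) b
termination_by (b - a).natAbs
decreasing_by all_goals omega

theorem seg_ne_nil (a b : ℤ) : seg a b ≠ [] := by
  rw [seg]; split <;> [skip; split] <;> simp

theorem head?_seg (a b : ℤ) : (seg a b).head? = some a := by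
  rw [seg]; split <;> [skip; split] <;> simp

theorem getLast?_seg (a b : ℤ) : (seg a b).getLast? = some b := by
  induction a using seg.induct (b := b) with
  | case1 => simp [seg]
  | case2 a hne hlt ih => rw [seg]; simp [hne, hlt, List.getLast?_cons, ih, Option.or_of_isSome]
  | case3 a hne hlt ih => rw [seg]; simp [hne, hlt, List.getLast?_cons, ih, Option.or_of_isSome]

theorem mem_seg (a b x : ℤ) : x ∈ seg a b ↔ (a ≤ x ∧ x ≤ b ∨ b ≤ x ∧ x ≤ a) := by
  induction a using seg.induct (b := b) with
  | case1 => simp [seg]; omega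
  | case2 a hne hlt ih => rw [seg]; simp [hne, hlt, ih]; omega
  | case3 a hne hlt ih => rw [seg]; simp [hne, hlt, ih]; omega

theorem nodup_seg (a b : ℤ) : (seg a b).Nodup := by
  induction a using seg.induct (b := b) with
  | case1 => simp [seg]
  | case2 a hne hlt ih => rw [seg]; simp [hne, hlt, ih, mem_seg]
  | case3 a hne hlt ih => rw [seg]; simp [hne, hlt, ih, mem_seg]; omega

theorem chain'_seg (a b : ℤ) : (seg a b).Chain' (fun x y => y - x = 1 ∨ y - x = -1) := by
  induction a using seg.induct (b := b) with
  | case1 => simp [seg, List.Chain']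
  | case2 a hne hlt ih =>
    rw [seg]; simp only [hne, hlt, if_neg, if_pos, ite_true, ite_false]
    refine List.isChain_cons.2 ⟨?_, ih⟩
    intro y hy; rw [head?_seg] at hy; simp at hy; omega
  | case3 a hne hlt ih =>
    rw [seg]; simp only [hne, hlt, if_neg, if_pos, ite_true, ite_false]
    refine List.isChain_cons.2 ⟨?_, ih⟩
    intro y hy; rw [head?_seg] at hy; simp at hy; omega

/-- The canonical monotone lemma: a nodup ±1-chain is a `seg`. -/
theorem mono_eq_seg : ∀ (l : List ℤ) (a : ℤ), l.head? = some a → l.Nodup →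
    l.Chain' (fun x y => y - x = 1 ∨ y - x = -1) →
    ∃ b, l.getLast? = some b ∧ l = seg a b
  | [], a => by simp
  | [x], a => by
    intro h _ _
    have hx : x = a := by simpa using h
    subst hx
    exact ⟨x, by simp, by rw [seg]; simp⟩
  | x :: y :: l, a => by
    intro hh hnd hch
    have hx : x = a := by simpa using hh
    subst hx
    obtain ⟨b, hlast, heq⟩ := mono_eq_seg (y :: l) y rfl hnd.of_cons (hch.tail)
    have hstep : y - x = 1 ∨ y - x = -1 := (List.isChain_cons_cons.1 hch).1
    have hnotmem : x ∉ y :: l := (List.nodup_cons.1 hnd).1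
    rw [heq, mem_seg] at hnotmem
    refine ⟨b, ?_, ?_⟩
    · rw [List.getLast?_cons_cons]; exact hlast
    · rw [heq]
      rcases hstep with h1 | h1
      · have hy : y = x + 1 := by omega
        subst hy
        have hab : x < b := by omega
        conv_rhs => rw [seg]
        rw [if_neg (by omega), if_pos hab]
      · have hy : y = x - 1 := by omega
        subst hy
        have hab : b < x := by omega
        conv_rhs => rw [seg]
        rw [if_neg (by omega), if_neg (by omega)]

def Step (a b : ℤ × ℤ) : Prop := b - a = (1, 0) ∨ b - a = (0, 1) ∨ b - a = (-1, 0)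

def row (y : ℕ) (a b : ℤ) : List (ℤ × ℤ) := (seg a b).map (fun x => (x, (y : ℤ)))

theorem row_ne_nil (y : ℕ) (a b : ℤ) : row y a b ≠ [] := by
  simp [row, seg_ne_nil]

theorem head?_row (y : ℕ) (a b : ℤ) : (row y a b).head? = some (a, (y : ℤ)) := by
  simp [row, List.head?_map, head?_seg]

theorem getLast?_row (y : ℕ) (a b : ℤ) : (row y a b).getLast? = some (b, (y : ℤ)) := by
  simp [row, List.getLast?_map, getLast?_seg]

theorem mem_row {y : ℕ} {a b : ℤ} {p : ℤ × ℤ} (h : p ∈ row y a b) :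
    p.2 = (y : ℤ) ∧ (a ≤ p.1 ∧ p.1 ≤ b ∨ b ≤ p.1 ∧ p.1 ≤ a) := by
  simp only [row, List.mem_map] at h
  obtain ⟨x, hx, rfl⟩ := h
  exact ⟨rfl, (mem_seg a b x).1 hx⟩

theorem nodup_row (y : ℕ) (a b : ℤ) : (row y a b).Nodup := by
  exact (nodup_seg a b).map (fun x x' h => by simpa using congrArg Prod.fst h)

theorem chain'_row (y : ℕ) (a b : ℤ) : (row y a b).Chain' Step := by
  rw [row, List.Chain', List.isChain_map]
  refine (chain'_seg a b).imp ?_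
  intro x x' h
  rcases h with h | h
  · left; ext <;> simp <;> omega
  · right; right; ext <;> simp <;> omega

theorem upStepStarts_cons_cons (p q : ℤ × ℤ) (l : List (ℤ × ℤ)) :
    upStepStarts (p :: q :: l) =
      (if q - p = (0, 1) then [p.1] else []) ++ upStepStarts (q :: l) := by
  simp only [upStepStarts, List.tail_cons, List.zip_cons_cons, List.filter_cons]
  split <;> simp_all

theorem upStepStarts_append (l1 l2 : List (ℤ × ℤ)) (p q : ℤ × ℤ)
    (h1 : l1.getLast? = some p) (h2 : l2.head? = some q) :
    upStepStarts (l1 ++ l2) =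
      upStepStarts l1 ++ (if q - p = (0, 1) then [p.1] else []) ++ upStepStarts l2 := by
  induction l1 generalizing p with
  | nil => simp at h1
  | cons x t ih =>
    cases t with
    | nil =>
      simp at h1; subst h1
      cases l2 with
      | nil => simp at h2
      | cons y l2' =>
        have hy : y = q := by simpa using h2
        subst hy
        rw [List.singleton_append, upStepStarts_cons_cons]
        simp [upStepStarts]
    | cons z t' =>
      rw [List.getLast?_cons_cons] at h1
      have H := ih p h1
      simp only [List.cons_append] at H ⊢
      rw [upStepStarts_cons_cons, H, upStepStarts_cons_cons]
      simp [List.append_assoc]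

theorem upStepStarts_of_const_snd (l : List (ℤ × ℤ)) (c : ℤ) (h : ∀ p ∈ l, p.2 = c) :
    upStepStarts l = [] := by
  rw [upStepStarts, List.map_eq_nil_iff, List.filter_eq_nil_iff]
  rintro ⟨u, w⟩ hm
  have hu := (List.of_mem_zip hm).1
  have hw := (List.of_mem_zip hm).2
  have hw' : w ∈ l := List.mem_of_mem_tail hw
  have : w.2 - u.2 = 0 := by rw [h u hu, h w hw']; ring
  simp only [decide_eq_true_eq]
  intro hc
  rw [Prod.ext_iff] at hc
  simp at hc
  omega

theorem upStepStarts_row (y : ℕ) (a b : ℤ) : upStepStarts (row y a b) = [] :=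
  upStepStarts_of_const_snd _ (y : ℤ) (fun p hp => (mem_row hp).1)

def pathAux (n : ℕ) : ℕ → ℤ → List ℤ → List (ℤ × ℤ)
  | y, a, [] => row y a n
  | y, a, b :: c => row y a b ++ pathAux n (y + 1) b c

theorem pathAux_ne_nil (n y : ℕ) (a : ℤ) (c : List ℤ) : pathAux n y a c ≠ [] := by
  cases c <;> simp [pathAux, row_ne_nil, seg_ne_nil, row]

theorem head?_pathAux (n y : ℕ) (a : ℤ) (c : List ℤ) :
    (pathAux n y a c).head? = some (a, (y : ℤ)) := by
  cases c with
  | nil => exact head?_row y a n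
  | cons b c => rw [pathAux, List.head?_append_of_ne_nil _ (row_ne_nil y a b), head?_row]

theorem snd_le_of_mem_pathAux (n : ℕ) : ∀ (y : ℕ) (a : ℤ) (c : List ℤ) (p : ℤ × ℤ),
    p ∈ pathAux n y a c → (y : ℤ) ≤ p.2
  | y, a, [], p => fun h => by rw [(mem_row h).1]
  | y, a, b :: c, p => fun h => by
    rw [pathAux, List.mem_append] at h
    rcases h with h | h
    · rw [(mem_row h).1]
    · have := snd_le_of_mem_pathAux n (y + 1) b c p h
      push_cast at this ⊢
      omega

theorem upStepStarts_pathAux (n : ℕ) : ∀ (y : ℕ) (a : ℤ) (c : List ℤ),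
    upStepStarts (pathAux n y a c) = c
  | y, a, [] => upStepStarts_row y a n
  | y, a, b :: c => by
    rw [pathAux, upStepStarts_append (row y a b) _ (b, (y : ℤ)) (b, ((y : ℕ) + 1 : ℕ))
        (getLast?_row y a b) (head?_pathAux n (y + 1) b c),
      upStepStarts_row, upStepStarts_pathAux n (y + 1) b c]
    rw [if_pos (by push_cast; ext <;> simp)]
    simp

def IsGen (n y : ℕ) (a : ℤ) (v : List (ℤ × ℤ)) : Prop :=
  v.head? = some (a, (y : ℤ)) ∧ v.getLast? = some ((n : ℤ), (n : ℤ)) ∧ v.Nodup ∧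
  (∀ p ∈ v, p.1 ≤ p.2 ∧ -p.2 ≤ p.1) ∧ v.Chain' Step

theorem isGen_pathAux (n : ℕ) : ∀ (y : ℕ) (a : ℤ) (c : List ℤ),
    y + c.length = n → -(y : ℤ) ≤ a → a ≤ (y : ℤ) →
    (∀ i (h : i < c.length), -((y : ℤ) + i) ≤ c.get ⟨i, h⟩ ∧ c.get ⟨i, h⟩ ≤ (y : ℤ) + i) →
    IsGen n y a (pathAux n y a c)
  | y, a, [] => by
    intro hlen ha1 ha2 _
    simp at hlen
    subst hlen
    refine ⟨head?_row _ _ _, getLast?_row _ _ _, nodup_row _ _ _, ?_, chain'_row _ _ _⟩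
    intro p hp
    obtain ⟨h2, h1⟩ := mem_row hp
    constructor <;> omega
  | y, a, b :: c => by
    intro hlen ha1 ha2 hc
    have hb1 : -(y : ℤ) ≤ b ∧ b ≤ (y : ℤ) := by
      have := hc 0 (by simp)
      simpa using this
    have hrec : IsGen n (y + 1) b (pathAux n (y + 1) b c) := by
      refine isGen_pathAux n (y + 1) b c (by simp at hlen ⊢; omega) (by push_cast; omega)
        (by push_cast; omega) ?_
      intro i h
      have := hc (i + 1) (by simpa using Nat.succ_lt_succ h)
      rw [List.get_cons_succ] at this
      push_cast at this ⊢
      constructor <;> omega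
    obtain ⟨hh, hl, hnd, hreg, hch⟩ := hrec
    rw [pathAux]
    refine ⟨?_, ?_, ?_, ?_, ?_⟩
    · rw [List.head?_append_of_ne_nil _ (row_ne_nil y a b), head?_row]
    · rw [List.getLast?_append_of_ne_nil _ (pathAux_ne_nil n (y + 1) b c), hl]
    · refine (nodup_row y a b).append hnd ?_
      intro p hp1 hp2
      have h1 := (mem_row hp1).1
      have h2 := snd_le_of_mem_pathAux n (y + 1) b c p hp2
      push_cast at h2
      omega
    · intro p hp
      rw [List.mem_append] at hp
      rcases hp with hp | hp
      · obtain ⟨h2, h1⟩ := mem_row hp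
        constructor <;> omega
      · exact hreg p hp
    · rw [List.Chain', List.isChain_append]
      refine ⟨chain'_row y a b, hch, ?_⟩
      intro p hp q hq
      rw [getLast?_row] at hp
      rw [hh] at hq
      simp at hp hq
      subst hp hq
      right; left
      rw [Prod.ext_iff]
      refine ⟨by simp, by push_cast; simp⟩

theorem map_eq_self_of {α : Type*} (l : List α) (f : α → α) (h : ∀ x ∈ l, f x = x) :
    l.map f = l := by
  induction l with
  | nil => rfl
  | cons x t ih => simp [h x (by simp), ih (fun z hz => h z (by simp [hz]))]

theorem chain'_fst_of_const_snd : ∀ (t : List (ℤ × ℤ)) (c : ℤ), (∀ p ∈ t, p.2 = c) →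
    t.Chain' Step → (t.map Prod.fst).Chain' (fun x x' => x' - x = 1 ∨ x' - x = -1)
  | [], _, _, _ => by simp [List.Chain']
  | [p], _, _, _ => by simp [List.Chain']
  | p :: q :: t, c, hsnd, hch => by
    rw [List.map_cons, List.map_cons, List.Chain', List.isChain_cons_cons]
    refine ⟨?_, chain'_fst_of_const_snd (q :: t) c (fun z hz => hsnd z (by simp [List.mem_cons] at hz ⊢; tauto)) hch.tail⟩
    have hs := (List.isChain_cons_cons.1 hch).1
    have h1 : p.2 = c := hsnd p (by simp)
    have h2 : q.2 = c := hsnd q (by simp)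
    rcases hs with h | h | h <;> rw [Prod.ext_iff] at h <;> simp at h <;> omega

theorem isGen_exists (n : ℕ) : ∀ (N : ℕ) (v : List (ℤ × ℤ)), v.length ≤ N →
    ∀ (y : ℕ) (a : ℤ), IsGen n y a v →
    ∃ c : List ℤ, y + c.length = n ∧
      (∀ i (h : i < c.length), -((y : ℤ) + i) ≤ c.get ⟨i, h⟩ ∧ c.get ⟨i, h⟩ ≤ (y : ℤ) + i) ∧
      v = pathAux n y a c := by
  intro N
  induction N with
  | zero =>
    intro v hlen y a hgen
    have : v = [] := by cases v <;> simp_all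
    subst this
    simp [IsGen] at hgen
  | succ N ih =>
    intro v hlen y a hgen
    obtain ⟨hh, hl, hnd, hreg, hch⟩ := hgen
    set P : ℤ × ℤ → Bool := fun p => decide (p.2 = (y : ℤ)) with hP
    set t := v.takeWhile P with ht
    set r := v.dropWhile P with hr
    have hsplit : v = t ++ r := (List.takeWhile_append_dropWhile (p := P) (l := v)).symm
    have htne : t ≠ [] := by
      cases v with
      | nil => simp at hh
      | cons v0 v' =>
        have hv0 : v0 = (a, (y : ℤ)) := by simpa using hh
        rw [ht, List.takeWhile_cons_of_pos (by simp [hP, hv0])]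
        simp
    have hsnd : ∀ p ∈ t, p.2 = (y : ℤ) := fun p hp => by
      simpa [hP] using List.mem_takeWhile_imp hp
    have hcha := hsplit ▸ hch
    rw [List.Chain', List.isChain_append] at hcha
    obtain ⟨hct, hcr, hbd⟩ := hcha
    have hndt : t.Nodup := hnd.sublist (List.takeWhile_sublist P)
    have hndr : r.Nodup := hnd.sublist (List.dropWhile_sublist P)
    -- head of t
    have hht : t.head? = some (a, (y : ℤ)) := by
      rw [hsplit, List.head?_append_of_ne_nil _ htne] at hh
      exact hh
    -- t is a row
    have hmap_head : (t.map Prod.fst).head? = some a := by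
      rw [List.head?_map, hht]; rfl
    have hmap_nodup : (t.map Prod.fst).Nodup := by
      refine hndt.map_on ?_
      intro p hp q hq hpq
      rw [Prod.ext_iff]
      exact ⟨hpq, by rw [hsnd p hp, hsnd q hq]⟩
    have hmap_chain := chain'_fst_of_const_snd t (y : ℤ) hsnd hct
    obtain ⟨b, hbl, hbseq⟩ := mono_eq_seg (t.map Prod.fst) a hmap_head hmap_nodup hmap_chain
    have htrow : t = row y a b := by
      have h1 : t.map (fun p : ℤ × ℤ => (p.1, (y : ℤ))) = t :=
        map_eq_self_of t _ (fun p hp => by rw [← hsnd p hp])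
      calc t = t.map (fun p : ℤ × ℤ => (p.1, (y : ℤ))) := h1.symm
        _ = (t.map Prod.fst).map (fun x => (x, (y : ℤ))) := by rw [List.map_map]; rfl
        _ = row y a b := by rw [hbseq]; rfl
    have hlt : t.getLast? = some (b, (y : ℤ)) := by rw [htrow, getLast?_row]
    cases hrc : r with
    | nil =>
      rw [hrc, List.append_nil] at hsplit
      rw [hsplit, hlt] at hl
      have hbn : b = (n : ℤ) ∧ ((y : ℕ) : ℤ) = (n : ℤ) := by
        simpa [Prod.ext_iff] using hl
      have hyn : y = n := by exact_mod_cast hbn.2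
      refine ⟨[], by simp [hyn], by simp, ?_⟩
      rw [hsplit, htrow, pathAux, hbn.1, hyn]
    | cons q r' =>
      have hq_not : ¬ P q := by
        have := List.head?_dropWhile_not P v
        rw [← hr, hrc] at this
        simpa using this
      have hq2 : q.2 ≠ (y : ℤ) := by simpa [hP] using hq_not
      have hstepq : Step (b, (y : ℤ)) q := by
        apply hbd (b, (y : ℤ)) hlt q
        rw [hrc]; rfl
      have hq : q = (b, (y : ℤ) + 1) := by
        rcases hstepq with h | h | h <;> rw [Prod.ext_iff] at h <;> simp at h <;>
          [omega; (ext <;> simp <;> omega); omega]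
      -- r is a generalized path
      have hrgen : IsGen n (y + 1) b r := by
        refine ⟨?_, ?_, hndr, ?_, hcr⟩
        · rw [hrc]; simp [hq]
        · rw [hsplit, List.getLast?_append_of_ne_nil _ (by rw [hrc]; simp)] at hl
          exact hl
        · intro p hp
          exact hreg p (hsplit ▸ List.mem_append_right t hp)
      have hrlen : r.length ≤ N := by
        have h1 : v.length = t.length + r.length := by rw [hsplit]; simp
        have h2 : 0 < t.length := List.length_pos_iff.mpr htne
        omega
      obtain ⟨c', hlen', hbds', heq'⟩ := ih r hrlen (y + 1) b hrgen
      have hbmem : ((b, (y : ℤ)) : ℤ × ℤ) ∈ v := by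
        rw [hsplit]
        refine List.mem_append_left r ?_
        rw [htrow, row]
        simp only [List.mem_map]
        exact ⟨b, by rw [mem_seg]; omega, rfl⟩
      have hbreg := hreg _ hbmem
      simp only at hbreg
      refine ⟨b :: c', by simp at hlen' ⊢; omega, ?_, ?_⟩
      · intro i hi
        cases i with
        | zero =>
          show -((y:ℤ) + ((0:ℕ):ℤ)) ≤ b ∧ b ≤ (y:ℤ) + ((0:ℕ):ℤ)
          push_cast
          omega
        | succ j =>
          rw [List.get_cons_succ]
          have := hbds' j (by simpa using Nat.lt_of_succ_lt_succ hi)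
          push_cast at this ⊢
          constructor <;> omega
      · rw [hsplit, htrow, heq', pathAux]

theorem isOPath_iff_isGen (n : ℕ) (v : List (ℤ × ℤ)) : IsOPath n v ↔ IsGen n 0 0 v := by
  unfold IsOPath IsGen Step
  norm_num

theorem key_lemma (n : ℕ) (v : List (ℤ × ℤ)) (hv : IsOPath n v) :
    ∃ c : List ℤ, c.length = n ∧
      (∀ i (h : i < c.length), -(i : ℤ) ≤ c.get ⟨i, h⟩ ∧ c.get ⟨i, h⟩ ≤ (i : ℤ)) ∧
      v = pathAux n 0 0 c ∧ upStepStarts v = c := by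
  obtain ⟨c, hlen, hbds, hveq⟩ :=
    isGen_exists n v.length v le_rfl 0 0 ((isOPath_iff_isGen n v).1 hv)
  refine ⟨c, by omega, fun i h => ?_, hveq, by rw [hveq, upStepStarts_pathAux]⟩
  have := hbds i h
  push_cast at this ⊢
  omega

theorem OPath_upSteps_bijection (n : ℕ) :
    (∀ v ∈ {v : List (ℤ × ℤ) | IsOPath n v}, (upStepStarts v).length = n) ∧
    Set.BijOn (fun v : List (ℤ × ℤ) => fun i : Fin n => (upStepStarts v).getD i 0)
      {v : List (ℤ × ℤ) | IsOPath n v}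
      {c : Fin n → ℤ | ∀ i : Fin n, -((i : ℕ) : ℤ) ≤ c i ∧ c i ≤ ((i : ℕ) : ℤ)} := by

  refine ⟨?_, ?_, ?_, ?_⟩
  · intro v hv
    obtain ⟨c, hlen, _, _, hup⟩ := key_lemma n v hv
    rw [hup, hlen]
  · -- MapsTo
    intro v hv
    obtain ⟨c, hlen, hbds, _, hup⟩ := key_lemma n v hv
    intro i
    simp only [Set.mem_setOf_eq]
    have hi : (i : ℕ) < c.length := by rw [hlen]; exact i.2
    rw [hup, List.getD_eq_getElem c 0 hi]
    have := hbds i hi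
    simpa using this
  · -- InjOn
    intro v1 h1 v2 h2 hfe
    obtain ⟨c1, hlen1, _, hv1, hup1⟩ := key_lemma n v1 h1
    obtain ⟨c2, hlen2, _, hv2, hup2⟩ := key_lemma n v2 h2
    have hc : c1 = c2 := by
      refine List.ext_getElem (by rw [hlen1, hlen2]) ?_
      intro i hi1 hi2
      have := congrFun hfe ⟨i, by rwa [hlen1] at hi1⟩
      simp only at this
      rwa [hup1, hup2, List.getD_eq_getElem c1 0 hi1, List.getD_eq_getElem c2 0 hi2] at this
    rw [hv1, hv2, hc]
  · -- SurjOn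
    intro f hf
    have hlen : (List.ofFn f).length = n := List.length_ofFn (f := f)
    have hgen : IsGen n 0 0 (pathAux n 0 0 (List.ofFn f)) := by
      refine isGen_pathAux n 0 0 (List.ofFn f) (by simp) (by simp) (by simp) ?_
      intro i h
      have hin : i < n := by rwa [hlen] at h
      have := hf ⟨i, hin⟩
      simp only [Set.mem_setOf_eq] at this
      have hg : (List.ofFn f).get ⟨i, h⟩ = f ⟨i, hin⟩ := by simp [List.get_ofFn]
      rw [hg]
      push_cast at this ⊢
      omega
    refine ⟨pathAux n 0 0 (List.ofFn f), (isOPath_iff_isGen n _).2 hgen, ?_⟩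
    funext i
    simp only
    rw [upStepStarts_pathAux]
    have hi : (i : ℕ) < (List.ofFn f).length := by rw [hlen]; exact i.2
    rw [List.getD_eq_getElem _ 0 hi]
    simp
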